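/- (Deterministic transformation between pure states.) Let H and H₂ be finite-dimensional complex inner product spaces, let φ_1,…,φ_n ∈ H and ψ_1,…,ψ_n ∈ H₂ be unit vectors. The following are equivalent: (i) there exists an n×n complex positive semidefinite matrix A with A_{ii} = 1 for all i such that ⟨φ_i, φ_j⟩ = ⟨ψ_i, ψ_j⟩ · A_{ij} for all i, j; (ii) there exist finite-dimensional complex inner product spaces K, K' and W, unit vectors χ_1,…,χ_n ∈ K and unit vectors α_1,…,α_n ∈ K' satisfying ⟨χ_i, χ_j⟩ = ⟨ψ_i, ψ_j⟩ · ⟨α_i, α_j⟩ for all i, j, and linear isometries U : H → W and J : K → W with U φ_i = J χ_i for all i. -/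

import Mathlib

open scoped ComplexOrder

/-- The Gram matrix of a family of vectors is positive semidefinite. -/
lemma gram_posSemidef {n : ℕ} {V : Type*} [NormedAddCommGroup V]
    [InnerProductSpace ℂ V] (α : Fin n → V) :
    (Matrix.of fun i j => (inner ℂ (α i) (α j) : ℂ)).PosSemidef := by
  rw [Matrix.posSemidef_iff_dotProduct_mulVec]
  constructor
  · ext i j
    simp only [Matrix.conjTranspose_apply, Matrix.of_apply]
    rw [← inner_conj_symm (α i) (α j)]
    rfl
  · intro x
    have key : (dotProduct (star x)
        ((Matrix.of fun i j => (inner ℂ (α i) (α j) : ℂ)).mulVec x))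
        = (inner ℂ (∑ i, x i • α i) (∑ j, x j • α j) : ℂ) := by
      simp only [dotProduct, Matrix.mulVec, dotProduct, Pi.star_apply,
        Matrix.of_apply, inner_sum, sum_inner, inner_smul_left, inner_smul_right,
        Finset.mul_sum]
      conv_rhs => rw [Finset.sum_comm]
      refine Finset.sum_congr rfl fun i _ => Finset.sum_congr rfl fun j _ => ?_
      simp only [RCLike.star_def]
      ring
    rw [key, inner_self_eq_norm_sq_to_K]
    have h : (0:ℝ) ≤ ‖∑ i, x i • α i‖ ^ 2 := sq_nonneg _
    rw [← RCLike.ofReal_pow]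
    exact RCLike.ofReal_nonneg.mpr h

section
open scoped MatrixOrder
lemma exists_sqrt_aux {n : ℕ} {A : Matrix (Fin n) (Fin n) ℂ} (hA : A.PosSemidef) :
    ∃ B : Matrix (Fin n) (Fin n) ℂ, B.PosSemidef ∧ B * B = A :=
  ⟨CFC.sqrt A, Matrix.nonneg_iff_posSemidef.mp (CFC.sqrt_nonneg A), CFC.sqrt_mul_sqrt_self A hA.nonneg⟩
end

/-- deterministic transformation between pure states.
For unit vectors `φ₁, …, φₙ ∈ H` and `ψ₁, …, ψₙ ∈ H₂`, the following are
equivalent: (i) there is a positive semidefinite matrix `A` with unit diagonal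
such that `⟨φᵢ, φⱼ⟩ = ⟨ψᵢ, ψⱼ⟩ Aᵢⱼ` for all `i, j`;
(ii) there are unit vectors `χᵢ` (the joint output-ancilla states) and unit
ancilla vectors `αᵢ` with `⟨χᵢ, χⱼ⟩ = ⟨ψᵢ, ψⱼ⟩ ⟨αᵢ, αⱼ⟩`, together with linear
isometries `U : H → W` and `J : K → W` with `U φᵢ = J χᵢ` for all `i`. -/
theorem deterministic_transformation_iff {n : ℕ} {H H₂ : Type*}
    [NormedAddCommGroup H] [InnerProductSpace ℂ H] [FiniteDimensional ℂ H]
    [NormedAddCommGroup H₂] [InnerProductSpace ℂ H₂] [FiniteDimensional ℂ H₂]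
    (φ : Fin n → H) (ψ : Fin n → H₂)
    (hφ : ∀ i, ‖φ i‖ = 1) (hψ : ∀ i, ‖ψ i‖ = 1) :
    (∃ A : Matrix (Fin n) (Fin n) ℂ, A.PosSemidef ∧ (∀ i, A i i = 1) ∧
        (∀ i j, (inner ℂ (φ i) (φ j) : ℂ)
            = (inner ℂ (ψ i) (ψ j) : ℂ) * A i j))
      ↔
    (∃ (K : Type) (_ : NormedAddCommGroup K) (_ : InnerProductSpace ℂ K)
        (_ : FiniteDimensional ℂ K)
        (K' : Type) (_ : NormedAddCommGroup K') (_ : InnerProductSpace ℂ K')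
        (_ : FiniteDimensional ℂ K')
        (W : Type) (_ : NormedAddCommGroup W) (_ : InnerProductSpace ℂ W)
        (_ : FiniteDimensional ℂ W)
        (χ : Fin n → K) (α : Fin n → K'),
        (∀ i, ‖χ i‖ = 1) ∧ (∀ i, ‖α i‖ = 1) ∧
        (∀ i j, (inner ℂ (χ i) (χ j) : ℂ)
            = (inner ℂ (ψ i) (ψ j) : ℂ) * (inner ℂ (α i) (α j) : ℂ)) ∧
        ∃ (U : H →ₗᵢ[ℂ] W) (J : K →ₗᵢ[ℂ] W),
          ∀ i, U (φ i) = J (χ i)) := by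
  constructor
  · rintro ⟨A, hA, hdiag, hinner⟩
    obtain ⟨B, hB, hBB⟩ := exists_sqrt_aux hA
    set d := Module.finrank ℂ H
    let e : H ≃ₗᵢ[ℂ] EuclideanSpace ℂ (Fin d) :=
      (stdOrthonormalBasis ℂ H).repr
    let α : Fin n → EuclideanSpace ℂ (Fin n) :=
      fun i => (WithLp.equiv 2 (Fin n → ℂ)).symm (fun k => B k i)
    have hconj : ∀ k i, (starRingEnd ℂ) (B k i) = B i k := fun k i =>
      hB.1.apply i k
    have hαij : ∀ i j, (inner ℂ (α i) (α j) : ℂ) = A i j := by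
      intro i j
      simp only [α, PiLp.inner_apply, RCLike.inner_apply, WithLp.equiv_symm_apply, WithLp.ofLp_toLp]
      conv_lhs => arg 2; ext k; rw [mul_comm]
      calc ∑ k, (starRingEnd ℂ) (B k i) * B k j
          = ∑ k, B i k * B k j := by simp [hconj]
        _ = (B * B) i j := rfl
        _ = A i j := by rw [hBB]
    refine ⟨EuclideanSpace ℂ (Fin d), inferInstance, inferInstance, inferInstance,
      EuclideanSpace ℂ (Fin n), inferInstance, inferInstance, inferInstance,
      EuclideanSpace ℂ (Fin d), inferInstance, inferInstance, inferInstance,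
      fun i => e (φ i), α, ?_, ?_, ?_, e.toLinearIsometry, LinearIsometry.id,
      fun i => rfl⟩
    · intro i; simp [hφ i]
    · intro i
      have h1 : (inner ℂ (α i) (α i) : ℂ) = 1 := by rw [hαij]; exact hdiag i
      have h2 := inner_self_eq_norm_sq_to_K (𝕜 := ℂ) (α i)
      rw [h1] at h2
      have h3 : (‖α i‖ : ℝ) ^ 2 = 1 := RCLike.ofReal_injective (K := ℂ)
        (by rw [RCLike.ofReal_pow, RCLike.ofReal_one]; exact h2.symm)
      nlinarith [norm_nonneg (α i)]
    · intro i j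
      rw [hαij, e.inner_map_map, hinner]
  · rintro ⟨K, _, _, _, K', _, _, _, W, _, _, _, χ, α, hχ, hα, hgram, U, J, hUJ⟩
    refine ⟨Matrix.of fun i j => (inner ℂ (α i) (α j) : ℂ), gram_posSemidef α,
      ?_, ?_⟩
    · intro i
      have h2 := inner_self_eq_norm_sq_to_K (𝕜 := ℂ) (α i)
      rw [hα i] at h2
      simpa using h2
    · intro i j
      have h1 : (inner ℂ (φ i) (φ j) : ℂ) = inner ℂ (χ i) (χ j) := by
        rw [← U.inner_map_map (φ i) (φ j), hUJ i, hUJ j, J.inner_map_map]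
      rw [h1, hgram]
      rfl
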